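/- Let S_n be a sequence of compact ρ,h-cone-convex subsets of ℝ^d and S a compact set with nonempty boundary such that d_H(S_n, S) → 0 in Hausdorff distance. Then d_H(∂S_n, ∂S) → 0. -/

import Mathlib

open MeasureTheory Metric Set Filter

noncomputable section

/-- The open finite cone with vertex `x`, axis `ξ`, opening angle `ρ` and height `h`. -/
def fcone (d : ℕ) (ρ h : ℝ) (x ξ : EuclideanSpace ℝ (Fin d)) :
    Set (EuclideanSpace ℝ (Fin d)) :=
  {z | z ≠ x ∧ (inner ℝ ξ (‖z - x‖⁻¹ • (z - x)) : ℝ) > Real.cos (ρ / 2)} ∩ Metric.ball x h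

/-- `S` is `ρ,h`-cone-convex. -/
def ConeConvex (d : ℕ) (ρ h : ℝ) (S : Set (EuclideanSpace ℝ (Fin d))) : Prop :=
  ∀ x ∈ frontier S, ∃ ξ : EuclideanSpace ℝ (Fin d), ‖ξ‖ = 1 ∧ fcone d ρ h x ξ ⊆ Sᶜ

/-- The `ρ,h`-cone-convex hull by complement. -/
def cccHull (d : ℕ) (ρ h : ℝ) (S : Set (EuclideanSpace ℝ (Fin d))) :
    Set (EuclideanSpace ℝ (Fin d)) :=
  ⋂₀ {A | ∃ y ξ : EuclideanSpace ℝ (Fin d),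
      ‖ξ‖ = 1 ∧ fcone d ρ h y ξ ∩ S = ∅ ∧ A = (fcone d ρ h y ξ)ᶜ}

/-- The `ρ,h`-cone-convex hull: intersection of all compact `ρ,h`-cone-convex supersets. -/
def ccHull (d : ℕ) (ρ h : ℝ) (S : Set (EuclideanSpace ℝ (Fin d))) :
    Set (EuclideanSpace ℝ (Fin d)) :=
  ⋂₀ {B | S ⊆ B ∧ IsCompact B ∧ B.Nonempty ∧ ConeConvex d ρ h B}

lemma cross_frontier {X : Type*} [TopologicalSpace X] {t A : Set X} (ht : IsPreconnected t)
    (h1 : (t ∩ A).Nonempty) (h2 : (t ∩ Aᶜ).Nonempty) : (t ∩ frontier A).Nonempty := by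
  by_contra hemp
  rw [Set.not_nonempty_iff_eq_empty] at hemp
  have hsub : t ⊆ interior A ∪ (closure A)ᶜ := by
    intro x hx
    by_cases h1' : x ∈ interior A
    · exact Or.inl h1'
    by_cases h2' : x ∈ closure A
    · exact (Set.eq_empty_iff_forall_notMem.1 hemp x ⟨hx, h2', h1'⟩).elim
    · exact Or.inr h2'
  rcases ht.subset_or_subset isOpen_interior isClosed_closure.isOpen_compl
      (disjoint_compl_right.mono_left interior_subset_closure) hsub with hsb | hsb
  · obtain ⟨x, hxt, hxA⟩ := h2
    exact hxA (interior_subset (hsb hxt))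
  · obtain ⟨x, hxt, hxA⟩ := h1
    exact hsb hxt (subset_closure hxA)

lemma ball_subset_fcone {d : ℕ} {ρ h : ℝ} {y ξ : EuclideanSpace ℝ (Fin d)} (hξ : ‖ξ‖ = 1)
    {t δ : ℝ} (hδ : 0 < δ) (hδt : δ < t) (hth : t + δ < h)
    (hκ0 : 0 ≤ Real.cos (ρ / 2)) (hκ : Real.cos (ρ / 2) * (t + δ) < t - δ) :
    Metric.ball (y + t • ξ) δ ⊆ fcone d ρ h y ξ := by
  intro z hz
  rw [Metric.mem_ball, dist_eq_norm] at hz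
  have hw : ‖z - y - t • ξ‖ < δ := by
    have : z - (y + t • ξ) = z - y - t • ξ := by abel
    rwa [this] at hz
  have hξξ : (inner ℝ ξ ξ : ℝ) = 1 := by
    rw [real_inner_self_eq_norm_sq, hξ]; norm_num
  have hib : |(inner ℝ ξ (z - y - t • ξ) : ℝ)| ≤ ‖z - y - t • ξ‖ := by
    have := abs_real_inner_le_norm ξ (z - y - t • ξ)
    rwa [hξ, one_mul] at this
  have h2 : (inner ℝ ξ (z - y) : ℝ) = inner ℝ ξ (z - y - t • ξ) + t := by
    simp only [inner_sub_right, real_inner_smul_right, hξξ]; ring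
  have hA : t - δ < (inner ℝ ξ (z - y) : ℝ) := by
    have := abs_le.1 hib
    linarith [this.1]
  have hnub : ‖z - y‖ < t + δ := by
    have h0t : 0 < t := hδ.trans hδt
    calc ‖z - y‖ = ‖(z - y - t • ξ) + t • ξ‖ := by rw [sub_add_cancel]
      _ ≤ ‖z - y - t • ξ‖ + ‖t • ξ‖ := norm_add_le _ _
      _ < δ + t := by
          rw [norm_smul, hξ, mul_one, Real.norm_eq_abs, abs_of_pos h0t]
          linarith
      _ = t + δ := by ring
  have hnlb : t - δ < ‖z - y‖ := by
    have := real_inner_le_norm ξ (z - y)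
    rw [hξ, one_mul] at this
    linarith
  have hvpos : 0 < ‖z - y‖ := by linarith
  have hzney : z ≠ y := by
    intro hzy
    rw [hzy, sub_self, norm_zero] at hvpos
    exact lt_irrefl _ hvpos
  refine ⟨⟨hzney, ?_⟩, ?_⟩
  · show Real.cos (ρ / 2) < (inner ℝ ξ (‖z - y‖⁻¹ • (z - y)) : ℝ)
    rw [real_inner_smul_right, inv_mul_eq_div, lt_div_iff₀ hvpos]
    calc Real.cos (ρ / 2) * ‖z - y‖ ≤ Real.cos (ρ / 2) * (t + δ) :=
          mul_le_mul_of_nonneg_left hnub.le hκ0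
      _ < t - δ := hκ
      _ < inner ℝ ξ (z - y) := hA
  · rw [Metric.mem_ball, dist_eq_norm]
    linarith

theorem stmt_8 {d : ℕ} {ρ h : ℝ} (hρ : ρ ∈ Set.Ioc 0 Real.pi) (hh : 0 < h)
    (Sn : ℕ → Set (EuclideanSpace ℝ (Fin d)))
    (hSn : ∀ n, IsCompact (Sn n)) (hSne : ∀ n, (Sn n).Nonempty)
    (hcc : ∀ n, ConeConvex d ρ h (Sn n))
    (S : Set (EuclideanSpace ℝ (Fin d))) (hS : IsCompact S)
    (hfr : (frontier S).Nonempty)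
    (hconv : Tendsto (fun n => Metric.hausdorffDist (Sn n) S) atTop (nhds 0)) :
    Tendsto (fun n => Metric.hausdorffDist (frontier (Sn n)) (frontier S)) atTop (nhds 0) := by
  have hSclosed : IsClosed S := hS.isClosed
  have hSne' : S.Nonempty := ⟨hfr.choose, hSclosed.frontier_subset hfr.choose_spec⟩
  have hEdist : ∀ n, EMetric.hausdorffEdist (Sn n) S ≠ ⊤ := fun n =>
    hausdorffEdist_ne_top_of_nonempty_of_bounded (hSne n) hSne' (hSn n).isBounded hS.isBounded
  -- cosine constant
  set κ := Real.cos (ρ / 2) with hκdef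
  have hκ0 : 0 ≤ κ := Real.cos_nonneg_of_mem_Icc
    ⟨by linarith [Real.pi_pos, hρ.1], by linarith [hρ.2]⟩
  have hκ1 : κ < 1 := by
    have := Real.cos_lt_cos_of_nonneg_of_le_pi le_rfl
      (by linarith [hρ.2, Real.pi_pos] : ρ / 2 ≤ Real.pi) (by linarith [hρ.1] : 0 < ρ / 2)
    simpa [Real.cos_zero] using this
  suffices H : ∀ ε > 0, ∀ᶠ n in atTop, hausdorffDist (frontier (Sn n)) (frontier S) < ε by
    rw [Metric.tendsto_atTop]
    intro ε hε
    obtain ⟨N, hN⟩ := eventually_atTop.1 (H ε hε)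
    exact ⟨N, fun n hn => by
      rw [Real.dist_eq, sub_zero, abs_of_nonneg hausdorffDist_nonneg]
      exact hN n hn⟩
  intro ε hε
  -- direction A setup: finite cover of frontier S
  have hfS : IsCompact (frontier S) :=
    hS.of_isClosed_subset isClosed_frontier hSclosed.frontier_subset
  have hε4 : 0 < ε / 4 := by linarith
  obtain ⟨F, hFsub, hFfin, hFcov⟩ := hfS.elim_finite_subcover_image
    (fun x _ => isOpen_ball) (fun x hx => mem_biUnion hx (mem_ball_self hε4))
  have hzex : ∀ x ∈ F, ∃ z', z' ∉ S ∧ dist x z' < ε / 4 := by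
    intro x hx
    have hxfr : x ∈ frontier S := hFsub hx
    have hxcl : x ∈ closure Sᶜ := by
      rw [frontier_eq_closure_inter_closure] at hxfr
      exact hxfr.2
    obtain ⟨z', hz'⟩ := Metric.mem_closure_iff.1 hxcl (ε / 4) hε4
    exact ⟨z', hz'.1, hz'.2⟩
  choose! z hz1 hz2 using hzex
  -- positive lower bound α on infDist (z x) S for x ∈ F
  have hinfpos : ∀ x ∈ F, 0 < infDist (z x) S := fun x hx =>
    (hSclosed.notMem_iff_infDist_pos hSne').1 (hz1 x hx)
  obtain ⟨α, hα0, hαle⟩ : ∃ α : ℝ, 0 < α ∧ ∀ x ∈ F, α ≤ infDist (z x) S := by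
    classical
    set G : Finset ℝ := insert 1 (hFfin.toFinset.image fun x => infDist (z x) S) with hGdef
    have hGne : G.Nonempty := ⟨1, Finset.mem_insert_self _ _⟩
    refine ⟨G.min' hGne, ?_, ?_⟩
    · rcases Finset.mem_insert.1 (G.min'_mem hGne) with h1 | h1
      · rw [h1]; norm_num
      · obtain ⟨x, hxF, hxeq⟩ := Finset.mem_image.1 h1
        rw [← hxeq]
        exact hinfpos x (hFfin.mem_toFinset.1 hxF)
    · intro x hx
      exact G.min'_le _ (Finset.mem_insert_of_mem
        (Finset.mem_image_of_mem _ (hFfin.mem_toFinset.2 hx)))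
  -- direction B constants
  set r : ℝ := min ε h / 2 with hrdef
  have hr0 : 0 < r := by
    rw [hrdef]; have := lt_min hε hh; positivity
  have hrε : r ≤ ε / 2 := by
    rw [hrdef]; have := min_le_left ε h; linarith
  have hrh : r ≤ h / 2 := by
    rw [hrdef]; have := min_le_right ε h; linarith
  set t : ℝ := r / 2 with htdef
  have ht0 : 0 < t := by rw [htdef]; linarith
  set δ : ℝ := t * (1 - κ) / (2 * (1 + κ)) with hδdef
  have hδ0 : 0 < δ := by
    rw [hδdef]
    apply div_pos (by nlinarith) (by nlinarith)
  have hδt : δ < t := by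
    rw [hδdef, div_lt_iff₀ (by nlinarith : (0:ℝ) < 2 * (1 + κ))]
    nlinarith
  have hδeq : δ * (2 * (1 + κ)) = t * (1 - κ) := by
    rw [hδdef]; field_simp
  have hκineq : κ * (t + δ) < t - δ := by nlinarith
  have htr : t ≤ r := by rw [htdef]; linarith
  have hth : t + δ < h := by linarith [hδt, htdef, hrh]
  -- eventual bound on Hausdorff distance
  set β : ℝ := min δ (min α (ε / 4)) with hβdef
  have hβ0 : 0 < β := by
    rw [hβdef]; exact lt_min hδ0 (lt_min hα0 hε4)
  have hβδ : β ≤ δ := min_le_left _ _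
  have hβα : β ≤ α := (min_le_right _ _).trans (min_le_left _ _)
  have hβε4 : β ≤ ε / 4 := (min_le_right _ _).trans (min_le_right _ _)
  filter_upwards [hconv.eventually (gt_mem_nhds hβ0)] with n hn
  -- hn : hausdorffDist (Sn n) S < β
  have hSnclosed : IsClosed (Sn n) := (hSn n).isClosed
  have key : hausdorffDist (frontier (Sn n)) (frontier S) ≤ ε / 2 := by
    apply hausdorffDist_le_of_infDist (by linarith)
    · -- direction B: frontier Sn close to frontier S
      intro y hy
      have hySn : y ∈ Sn n := hSnclosed.frontier_subset hy
      have hyS : infDist y S < β := lt_of_le_of_lt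
        (infDist_le_hausdorffDist_of_mem hySn (hEdist n)) hn
      have hβr : β ≤ r := by linarith [hβδ, hδt.le, htr]
      obtain ⟨s₀, hs₀S, hs₀d⟩ := (infDist_lt_iff hSne').1 (hyS.trans_le hβr)
      -- hs₀d : dist y s₀ < r
      have claim : (ball y r ∩ frontier S).Nonempty := by
        by_contra hemp
        rw [Set.not_nonempty_iff_eq_empty] at hemp
        have hsub : ball y r ⊆ interior S ∪ (closure S)ᶜ := by
          intro w hw
          by_cases h1' : w ∈ interior S
          · exact Or.inl h1'
          by_cases h2' : w ∈ closure S
          · exact (Set.eq_empty_iff_forall_notMem.1 hemp w ⟨hw, h2', h1'⟩).elim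
          · exact Or.inr h2'
        rcases (convex_ball y r).isPreconnected.subset_or_subset isOpen_interior
            isClosed_closure.isOpen_compl
            (disjoint_compl_right.mono_left interior_subset_closure) hsub with hbs | hbs
        · -- ball ⊆ interior S : cone argument
          obtain ⟨ξ, hξ, hcone⟩ := hcc n y hy
          have hcball : y + t • ξ ∈ ball y r := by
            rw [mem_ball, dist_eq_norm]
            have : y + t • ξ - y = t • ξ := by abel
            rw [this, norm_smul, hξ, mul_one, Real.norm_eq_abs, abs_of_pos ht0]
            rw [htdef]; linarith
          have hcS : y + t • ξ ∈ S := interior_subset (hbs hcball)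
          have hballc : ball (y + t • ξ) δ ⊆ (Sn n)ᶜ :=
            (ball_subset_fcone hξ hδ0 hδt hth hκ0 hκineq).trans hcone
          have hinf : infDist (y + t • ξ) (Sn n) < δ := by
            have h1 : infDist (y + t • ξ) (Sn n) ≤ hausdorffDist S (Sn n) :=
              infDist_le_hausdorffDist_of_mem hcS (by
                rw [EMetric.hausdorffEdist_comm]; exact hEdist n)
            rw [hausdorffDist_comm] at h1
            linarith
          obtain ⟨p, hpSn, hpd⟩ := (infDist_lt_iff (hSne n)).1 hinf
          exact hballc (by rw [mem_ball, dist_comm]; exact hpd) hpSn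
        · -- ball ⊆ (closure S)ᶜ : contradiction with s₀
          exact hbs (by rw [mem_ball, dist_comm]; exact hs₀d) (subset_closure hs₀S)
      obtain ⟨w, hwball, hwfr⟩ := claim
      calc infDist y (frontier S) ≤ dist y w := infDist_le_dist_of_mem hwfr
        _ ≤ ε / 2 := by rw [dist_comm]; exact (mem_ball.1 hwball).le.trans hrε
    · -- direction A: frontier S close to frontier Sn
      intro x hx
      obtain ⟨x₀, hx₀F, hxball⟩ := by
        have := hFcov hx
        simpa using this
      have hx₀fr : x₀ ∈ frontier S := hFsub hx₀F
      have hdxz : dist x (z x₀) < ε / 2 := by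
        calc dist x (z x₀) ≤ dist x x₀ + dist x₀ (z x₀) := dist_triangle _ _ _
          _ < ε / 4 + ε / 4 := add_lt_add (mem_ball.1 hxball) (hz2 x₀ hx₀F)
          _ = ε / 2 := by ring
      have hzSn : z x₀ ∉ Sn n := by
        intro hmem
        have : infDist (z x₀) S ≤ hausdorffDist (Sn n) S :=
          infDist_le_hausdorffDist_of_mem hmem (hEdist n)
        have hge := hαle x₀ hx₀F
        linarith
      have hxS : x ∈ S := hSclosed.frontier_subset hx
      have hxSn : infDist x (Sn n) < ε / 4 := by
        have h1 : infDist x (Sn n) ≤ hausdorffDist S (Sn n) :=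
          infDist_le_hausdorffDist_of_mem hxS (by
            rw [EMetric.hausdorffEdist_comm]; exact hEdist n)
        rw [hausdorffDist_comm] at h1
        linarith
      obtain ⟨a, haSn, had⟩ := (infDist_lt_iff (hSne n)).1 hxSn
      have hseg : (segment ℝ a (z x₀) ∩ frontier (Sn n)).Nonempty := by
        apply cross_frontier (convex_segment a (z x₀)).isPreconnected
        · exact ⟨a, left_mem_segment ℝ a (z x₀), haSn⟩
        · exact ⟨z x₀, right_mem_segment ℝ a (z x₀), hzSn⟩
      obtain ⟨w, hwseg, hwfr⟩ := hseg
      have hwb : w ∈ ball x (ε / 2) := by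
        apply (convex_ball x (ε / 2)).segment_subset _ _ hwseg
        · rw [mem_ball, dist_comm]; linarith
        · rw [mem_ball, dist_comm]; linarith
      calc infDist x (frontier (Sn n)) ≤ dist x w := infDist_le_dist_of_mem hwfr
        _ ≤ ε / 2 := by rw [dist_comm]; exact (mem_ball.1 hwb).le
  linarith [key]
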